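/- Let S be a dense subsemigroup of a Hausdorff semitopological semigroup (T,+), e an idempotent of T, and (X, ⟨T_s⟩_{s∈S}) a dynamical system. Two points x, y ∈ X are proximal near e if and only if there exists p ∈ e*_S such that T_p(x) = T_p(y). -/
import Mathlib


open Filter Topology Set

attribute [local instance] Ultrafilter.add Ultrafilter.addSemigroup

universe u

section NearIdem

variable {T : Type u} [AddSemigroup T] [TopologicalSpace T]

/-- The set of ultrafilters on `S` converging to `e` (denoted `e*_S`). -/
def EStar (S : AddSubsemigroup T) (e : T) : Set (Ultrafilter S) :=
  {p | ∀ U ∈ nhds e, {s : S | (s : T) ∈ U} ∈ p}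

/-- `B ⊆ S` is syndetic near `e`. -/
def SyndeticNear (S : AddSubsemigroup T) (e : T) (B : Set S) : Prop :=
  ∀ U ∈ nhds e, ∃ F : Finset S, (∀ t ∈ F, (t : T) ∈ U) ∧
    ∃ V ∈ nhds e, ∀ s : S, (s : T) ∈ V → ∃ t ∈ F, t + s ∈ B

/-- `A ⊆ S` is topologically piecewise syndetic near `e`. -/
def TopPWSNear (S : AddSubsemigroup T) (e : T) (A : Set S) : Prop :=
  ∀ U ∈ nhds e, ∃ F : Finset S, (∀ t ∈ F, (t : T) ∈ U) ∧
    ∃ V ∈ nhds e, ∀ G : Finset S, ∀ O ∈ nhds e, ∃ x : S, (x : T) ∈ O ∧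
      ∀ g ∈ G, (g : T) ∈ V → ∃ t ∈ F, t + (g + x) ∈ A

/-- Left ideal of a subsemigroup `E` of `βM`. -/
def IsLeftIdealIn {M : Type*} [AddSemigroup M] (E L : Set (Ultrafilter M)) : Prop :=
  L.Nonempty ∧ L ⊆ E ∧ ∀ p ∈ E, ∀ q ∈ L, p + q ∈ L

/-- Minimal left ideal of `E`. -/
def IsMinimalLeftIdealIn {M : Type*} [AddSemigroup M] (E L : Set (Ultrafilter M)) : Prop :=
  IsLeftIdealIn E L ∧ ∀ L', IsLeftIdealIn E L' → L' ⊆ L → L' = L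

/-- The smallest ideal `K(E)`, the union of all minimal left ideals of `E`. -/
def SmallestIdeal {M : Type*} [AddSemigroup M] (E : Set (Ultrafilter M)) : Set (Ultrafilter M) :=
  {p | ∃ L, IsMinimalLeftIdealIn E L ∧ p ∈ L}

/-- `T_p(x) = p`-`lim_(s ∈ S) T_s(x)`. -/
noncomputable def TP {M : Type*} {X : Type*} [TopologicalSpace X]
    (Ts : M → X → X) (p : Ultrafilter M) (x : X) : X :=
  (p.map fun s => Ts s x).lim

/-- `x` is a uniformly recurrent point near `e`. -/
def UnifRecNear (S : AddSubsemigroup T) (e : T) {X : Type*} [TopologicalSpace X]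
    (Ts : S → X → X) (x : X) : Prop :=
  ∀ W ∈ nhds x, SyndeticNear S e {s : S | Ts s x ∈ W}

/-- `x` and `y` are proximal near `e` (characterized via `e*_S`). -/
noncomputable def ProximalNear (S : AddSubsemigroup T) (e : T) {X : Type*} [TopologicalSpace X]
    (Ts : S → X → X) (x y : X) : Prop :=
  ∃ p ∈ EStar S e, TP Ts p x = TP Ts p y

variable [T2Space T]

/-- `x` and `y` are proximal near `e` iff `T_p(x) = T_p(y)` for some `p ∈ e*_S`. -/
theorem proximalNear_iff (S : AddSubsemigroup T) (hdense : Dense (S : Set T))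
    (hl : ∀ t : T, Continuous fun x : T => t + x)
    (hr : ∀ t : T, Continuous fun x : T => x + t)
    (e : T) (he : e + e = e)
    {X : Type u} [TopologicalSpace X] [CompactSpace X] [T2Space X]
    (Ts : S → X → X) (hTcont : ∀ s, Continuous (Ts s))
    (hTact : ∀ s t z, Ts s (Ts t z) = Ts (s + t) z) (x y : X) :
    (∀ U ∈ nhdsSet (Set.diagonal X), ∀ V ∈ nhds e,
        ∃ s : S, (s : T) ∈ V ∧ (Ts s x, Ts s y) ∈ U) ↔
      ProximalNear S e Ts x y := by
  constructor
  · intro h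
    set F : Filter S := Filter.comap (Subtype.val : S → T) (nhds e) ⊓
      Filter.comap (fun s : S => (Ts s x, Ts s y)) (nhdsSet (Set.diagonal X)) with hF
    have hne : F.NeBot := by
      refine Filter.forall_mem_nonempty_iff_neBot.mp ?_
      intro A hA
      rw [hF, Filter.mem_inf_iff] at hA
      obtain ⟨A1, hA1, A2, hA2, rfl⟩ := hA
      obtain ⟨V, hV, hV'⟩ := Filter.mem_comap.mp hA1
      obtain ⟨U, hU, hU'⟩ := Filter.mem_comap.mp hA2
      obtain ⟨s, hsV, hsU⟩ := h U hU V hV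
      exact ⟨s, hV' hsV, hU' hsU⟩
    set p : Ultrafilter S := @Ultrafilter.of S F hne with hp
    have hpF : (p : Filter S) ≤ F := Ultrafilter.of_le F
    have hpE : p ∈ EStar S e := by
      intro U hU
      have : (Subtype.val : S → T) ⁻¹' U ∈ F :=
        Filter.mem_inf_of_left (Filter.preimage_mem_comap hU)
      exact hpF this
    have hpD : ∀ U ∈ nhdsSet (Set.diagonal X),
        {s : S | (Ts s x, Ts s y) ∈ U} ∈ p := by
      intro U hU
      have : ((fun s : S => (Ts s x, Ts s y)) ⁻¹' U) ∈ F :=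
        Filter.mem_inf_of_right (Filter.preimage_mem_comap hU)
      exact hpF this
    refine ⟨p, hpE, ?_⟩
    have htx : Filter.Tendsto (fun s : S => Ts s x) p (nhds (TP Ts p x)) := by
      have := Ultrafilter.le_nhds_lim (p.map fun s : S => Ts s x)
      rwa [Ultrafilter.coe_map] at this
    have hty : Filter.Tendsto (fun s : S => Ts s y) p (nhds (TP Ts p y)) := by
      have := Ultrafilter.le_nhds_lim (p.map fun s : S => Ts s y)
      rwa [Ultrafilter.coe_map] at this
    have htp : Filter.Tendsto (fun s : S => (Ts s x, Ts s y)) p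
        (nhds (TP Ts p x, TP Ts p y)) := htx.prodMk_nhds hty
    by_contra hab
    have hdisj : Disjoint (Set.diagonal X) {(TP Ts p x, TP Ts p y)} := by
      rw [Set.disjoint_singleton_right]
      exact fun hmem => hab hmem
    obtain ⟨W, W', hWo, hW'o, hWsub, hW'sub, hWW'⟩ :=
      normal_separation isClosed_diagonal isClosed_singleton hdisj
    have hWnhds : W ∈ nhdsSet (Set.diagonal X) := hWo.mem_nhdsSet.mpr hWsub
    have hmemW : {s : S | (Ts s x, Ts s y) ∈ W} ∈ p := hpD W hWnhds
    have hmemW' : {s : S | (Ts s x, Ts s y) ∈ W'} ∈ p :=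
      htp (hW'o.mem_nhds (hW'sub rfl))
    obtain ⟨s, hs1, hs2⟩ := p.nonempty_of_mem (p.inter_mem hmemW hmemW')
    exact Set.disjoint_left.mp hWW' hs1 hs2
  · rintro ⟨p, hpE, heq⟩
    intro U hU V hV
    have htx : Filter.Tendsto (fun s : S => Ts s x) p (nhds (TP Ts p x)) := by
      have := Ultrafilter.le_nhds_lim (p.map fun s : S => Ts s x)
      rwa [Ultrafilter.coe_map] at this
    have hty0 : Filter.Tendsto (fun s : S => Ts s y) p (nhds (TP Ts p y)) := by
      have := Ultrafilter.le_nhds_lim (p.map fun s : S => Ts s y)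
      rwa [Ultrafilter.coe_map] at this
    have hty : Filter.Tendsto (fun s : S => Ts s y) p (nhds (TP Ts p x)) := by
      rw [heq]; exact hty0
    have htp : Filter.Tendsto (fun s : S => (Ts s x, Ts s y)) p
        (nhds (TP Ts p x, TP Ts p x)) := htx.prodMk_nhds hty
    have hUnhds : U ∈ nhds ((TP Ts p x, TP Ts p x)) :=
      mem_nhdsSet_iff_forall.mp hU _ rfl
    have h1 : {s : S | (Ts s x, Ts s y) ∈ U} ∈ p := htp hUnhds
    have h2 : {s : S | (s : T) ∈ V} ∈ p := hpE V hV
    obtain ⟨s, hs1, hs2⟩ := p.nonempty_of_mem (p.inter_mem h1 h2)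
    exact ⟨s, hs2, hs1⟩

end NearIdem
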